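/- For any two continuous group homomorphisms φ, φ′ : ℤ_p → 𝒪^× one has sup_{a ∈ ℤ_p} |φ(a) − φ′(a)| = |φ(1) − φ′(1)|. In particular, endowing the set Hom_c(ℤ_p, 𝒪^×) of continuous homomorphisms with the metric of uniform convergence, evaluation at 1 is a homeomorphism from Hom_c(ℤ_p, 𝒪^×) onto U_1 = {x ∈ ℂ_p : |x − 1| < 1} with its subspace topology. -/
import Mathlib

open Filter IsUltrametricDist Finset Topology

namespace EvalOneAux

variable {p : ℕ} [hp : Fact p.Prime]
variable {K : Type*} [NormedField K] [IsUltrametricDist K]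

lemma norm_add_eq_left {a b : K} (h : ‖b‖ < ‖a‖) : ‖a + b‖ = ‖a‖ := by
  refine le_antisymm ((norm_add_le_max a b).trans (max_le le_rfl h.le)) ?_
  have h2 : ‖a‖ ≤ max ‖a + b‖ ‖b‖ := by
    simpa using norm_add_le_max (a + b) (-b)
  rcases le_max_iff.mp h2 with h' | h'
  · exact h'
  · linarith

lemma norm_geom_sum_le_one {n : ℕ} {u : K} (hu : ‖u‖ ≤ 1) :
    ‖∑ i ∈ Finset.range n, u ^ i‖ ≤ 1 :=
  norm_sum_le_of_forall_le_of_nonneg zero_le_one fun i _ => by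
    rw [norm_pow]; exact pow_le_one₀ (norm_nonneg _) hu

lemma pow_sub_one_norm_le {u : K} (hu : ‖u‖ ≤ 1) (n : ℕ) : ‖u ^ n - 1‖ ≤ ‖u - 1‖ := by
  rw [← geom_sum_mul, norm_mul]
  calc ‖∑ i ∈ Finset.range n, u ^ i‖ * ‖u - 1‖ ≤ 1 * ‖u - 1‖ :=
        mul_le_mul_of_nonneg_right (norm_geom_sum_le_one hu) (norm_nonneg _)
    _ = ‖u - 1‖ := one_mul _

lemma pow_sub_pow_norm_le {u v : K} (hu : ‖u‖ ≤ 1) (hv : ‖v‖ ≤ 1) (n : ℕ) :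
    ‖u ^ n - v ^ n‖ ≤ ‖u - v‖ := by
  rw [← geom_sum₂_mul, norm_mul]
  have h1 : ‖∑ i ∈ Finset.range n, u ^ i * v ^ (n - 1 - i)‖ ≤ 1 := by
    refine norm_sum_le_of_forall_le_of_nonneg zero_le_one fun i _ => ?_
    rw [norm_mul, norm_pow, norm_pow]
    exact mul_le_one₀ (pow_le_one₀ (norm_nonneg _) hu) (by positivity)
      (pow_le_one₀ (norm_nonneg _) hv)
  calc ‖∑ i ∈ Finset.range n, u ^ i * v ^ (n - 1 - i)‖ * ‖u - v‖ ≤ 1 * ‖u - v‖ :=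
        mul_le_mul_of_nonneg_right h1 (norm_nonneg _)
    _ = ‖u - v‖ := one_mul _

lemma pow_p_sub_one_le {u : K} (hu : ‖u‖ ≤ 1) (q : ℕ) :
    ‖u ^ q - 1‖ ≤ max ‖u - 1‖ ‖(q : K)‖ * ‖u - 1‖ := by
  rw [← geom_sum_mul, norm_mul]
  have h1 : ‖∑ i ∈ Finset.range q, u ^ i‖ ≤ max ‖u - 1‖ ‖(q : K)‖ := by
    have hq : (∑ i ∈ Finset.range q, u ^ i) = (∑ i ∈ Finset.range q, (u ^ i - 1)) + (q : K) := by
      rw [Finset.sum_sub_distrib]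
      simp
    rw [hq]
    refine (norm_add_le_max _ _).trans (max_le_max ?_ le_rfl)
    exact norm_sum_le_of_forall_le_of_nonneg (norm_nonneg _)
      fun i _ => pow_sub_one_norm_le hu i
  exact mul_le_mul_of_nonneg_right h1 (norm_nonneg _)

lemma norm_le_one_of_sub {x : K} (hx1 : ‖x - 1‖ ≤ 1) : ‖x‖ ≤ 1 := by
  have : x = 1 + (x - 1) := by ring
  rw [this]
  exact (norm_add_le_max _ _).trans (by simpa using hx1)

lemma pow_pow_sub_one_le {x : K} (hx1 : ‖x - 1‖ ≤ 1) (q k : ℕ) :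
    ‖x ^ q ^ k - 1‖ ≤ (max ‖x - 1‖ ‖(q : K)‖) ^ k * ‖x - 1‖ := by
  set c : ℝ := max ‖x - 1‖ ‖(q : K)‖ with hc
  have hq1 : ‖(q : K)‖ ≤ 1 := IsUltrametricDist.norm_natCast_le_one K q
  have hcle : c ≤ 1 := max_le hx1 hq1
  have hc0 : 0 ≤ c := le_max_of_le_right (norm_nonneg _)
  have hx : ‖x‖ ≤ 1 := norm_le_one_of_sub hx1
  induction k with
  | zero => simp
  | succ k ih =>
    have hy : ‖x ^ q ^ k‖ ≤ 1 := by
      rw [norm_pow]; exact pow_le_one₀ (norm_nonneg _) hx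
    have h1 : ‖(x ^ q ^ k) ^ q - 1‖ ≤ max ‖x ^ q ^ k - 1‖ ‖(q : K)‖ * ‖x ^ q ^ k - 1‖ :=
      pow_p_sub_one_le hy q
    have h2 : max ‖x ^ q ^ k - 1‖ ‖(q : K)‖ ≤ c := by
      refine max_le ?_ (le_max_right _ _)
      refine ih.trans ?_
      calc c ^ k * ‖x - 1‖ ≤ 1 * c :=
            mul_le_mul (pow_le_one₀ hc0 hcle) (le_max_left _ _) (norm_nonneg _) zero_le_one
        _ = c := one_mul _
    have h3 : ‖x ^ q ^ k - 1‖ ≤ c ^ k * ‖x - 1‖ := ih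
    calc ‖x ^ q ^ (k + 1) - 1‖ = ‖(x ^ q ^ k) ^ q - 1‖ := by rw [← pow_mul, pow_succ]
      _ ≤ max ‖x ^ q ^ k - 1‖ ‖(q : K)‖ * ‖x ^ q ^ k - 1‖ := h1
      _ ≤ c * (c ^ k * ‖x - 1‖) := by
          apply mul_le_mul h2 h3 (norm_nonneg _) hc0
      _ = c ^ (k + 1) * ‖x - 1‖ := by ring

lemma key_estimate {x : K} (hx1 : ‖x - 1‖ ≤ 1) (q k : ℕ) {m n : ℕ} (h : m ≡ n [MOD q ^ k]) :
    ‖x ^ m - x ^ n‖ ≤ (max ‖x - 1‖ ‖(q : K)‖) ^ k * ‖x - 1‖ := by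
  have hx : ‖x‖ ≤ 1 := norm_le_one_of_sub hx1
  suffices H : ∀ m n : ℕ, n ≤ m → m ≡ n [MOD q ^ k] →
      ‖x ^ m - x ^ n‖ ≤ (max ‖x - 1‖ ‖(q : K)‖) ^ k * ‖x - 1‖ by
    rcases le_total n m with h' | h'
    · exact H m n h' h
    · rw [norm_sub_rev]; exact H n m h' h.symm
  intro m n hnm h
  obtain ⟨j, hj⟩ : q ^ k ∣ m - n := (Nat.modEq_iff_dvd' hnm).mp h.symm
  have hm : m = n + q ^ k * j := by omega
  have heq : x ^ m - x ^ n = x ^ n * ((x ^ q ^ k) ^ j - 1) := by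
    rw [hm, pow_add, ← pow_mul]; ring
  rw [heq, norm_mul]
  have h1 : ‖x ^ n‖ ≤ 1 := by rw [norm_pow]; exact pow_le_one₀ (norm_nonneg _) hx
  have h2 : ‖(x ^ q ^ k) ^ j - 1‖ ≤ ‖x ^ q ^ k - 1‖ :=
    pow_sub_one_norm_le (by rw [norm_pow]; exact pow_le_one₀ (norm_nonneg _) hx) j
  have h3 := pow_pow_sub_one_le hx1 q k
  calc ‖x ^ n‖ * ‖(x ^ q ^ k) ^ j - 1‖ ≤ 1 * ‖x ^ q ^ k - 1‖ :=
        mul_le_mul h1 h2 (norm_nonneg _) zero_le_one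
    _ = ‖x ^ q ^ k - 1‖ := one_mul _
    _ ≤ _ := h3

lemma nat_modEq_of_norm {M N k : ℕ} (h : ‖(M : ℤ_[p]) - (N : ℤ_[p])‖ ≤ (p : ℝ) ^ (-(k : ℤ))) :
    M ≡ N [MOD p ^ k] := by
  have hdvd : ((p : ℤ)) ^ k ∣ (M : ℤ) - (N : ℤ) := by
    rw [← PadicInt.norm_int_le_pow_iff_dvd]
    push_cast
    exact h
  rw [Nat.modEq_iff_dvd]
  push_cast
  exact dvd_sub_comm.mp hdvd

lemma appr_dist (a : ℤ_[p]) (n : ℕ) : ‖(a.appr n : ℤ_[p]) - a‖ ≤ (p : ℝ) ^ (-(n : ℤ)) := by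
  rw [norm_sub_rev]
  exact (PadicInt.norm_le_pow_iff_mem_span_pow _ n).mpr (PadicInt.appr_spec n a)

lemma pow_neg_le {k m : ℕ} (hk : k ≤ m) : (p : ℝ) ^ (-(m : ℤ)) ≤ (p : ℝ) ^ (-(k : ℤ)) := by
  apply zpow_le_zpow_right₀ (by exact_mod_cast hp.out.one_lt.le) (by omega)

lemma appr_modEq {a b : ℤ_[p]} {k m n : ℕ} (hk : k ≤ m) (hk' : k ≤ n)
    (hab : ‖a - b‖ ≤ (p : ℝ) ^ (-(k : ℤ))) : a.appr m ≡ b.appr n [MOD p ^ k] := by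
  apply nat_modEq_of_norm
  have : (a.appr m : ℤ_[p]) - b.appr n =
      ((a.appr m : ℤ_[p]) - a) + ((a - b) + (b - (b.appr n : ℤ_[p]))) := by ring
  rw [this]
  refine (norm_add_le_max _ _).trans (max_le ((appr_dist a m).trans (pow_neg_le hk)) ?_)
  refine (norm_add_le_max _ _).trans (max_le hab ?_)
  rw [norm_sub_rev]
  exact (appr_dist b n).trans (pow_neg_le hk')

lemma exists_hom [CompleteSpace K] (hpK : ‖(p : K)‖ < 1) (x : K) (hx : ‖x - 1‖ < 1) :
    ∃ φ : C(ℤ_[p], K), (∀ a b, φ (a + b) = φ a * φ b) ∧ (∀ a, ‖φ a‖ = 1) ∧ φ 1 = x := by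
  set c : ℝ := max ‖x - 1‖ ‖(p : K)‖ with hc
  have hc1 : c < 1 := max_lt hx hpK
  have hc0 : 0 ≤ c := le_max_of_le_right (norm_nonneg _)
  have hx1 : ‖x - 1‖ ≤ 1 := hx.le
  have hxn : ‖x‖ = 1 := by
    have h1 : (1 : K) + (x - 1) = x := by ring
    rw [← h1, norm_add_eq_left (by simpa using hx)]
    simp
  have hb0 : Tendsto (fun N : ℕ => c ^ N * ‖x - 1‖) atTop (𝓝 0) := by
    simpa using (tendsto_pow_atTop_nhds_zero_of_lt_one hc0 hc1).mul_const ‖x - 1‖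
  have hkey : ∀ (k : ℕ) {m n : ℕ}, m ≡ n [MOD p ^ k] → ‖x ^ m - x ^ n‖ ≤ c ^ k * ‖x - 1‖ :=
    fun k _ _ h => key_estimate hx1 p k h
  have hs : ∀ a : ℤ_[p], CauchySeq (fun n => x ^ a.appr n) := by
    intro a
    refine cauchySeq_of_le_tendsto_0 (fun N => c ^ N * ‖x - 1‖) (fun n m N hn hm => ?_) hb0
    rw [dist_eq_norm]
    refine hkey N (appr_modEq hn hm ?_)
    simp only [sub_self, norm_zero]
    positivity
  set φf : ℤ_[p] → K := fun a => limUnder atTop (fun n => x ^ a.appr n) with hφf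
  have htend : ∀ a, Tendsto (fun n => x ^ a.appr n) atTop (𝓝 (φf a)) :=
    fun a => (hs a).tendsto_limUnder
  have hnorm : ∀ a, ‖φf a‖ = 1 := by
    intro a
    have h1 := (htend a).norm
    simp only [norm_pow, hxn, one_pow] at h1
    exact (tendsto_nhds_unique h1 tendsto_const_nhds).symm ▸ rfl
  have hest : ∀ (k : ℕ) (a b : ℤ_[p]), ‖a - b‖ ≤ (p : ℝ) ^ (-(k : ℤ)) →
      ‖φf a - φf b‖ ≤ c ^ k * ‖x - 1‖ := by
    intro k a b hab
    refine le_of_tendsto ((htend a).sub (htend b)).norm ?_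
    filter_upwards [eventually_ge_atTop k] with n hn
    exact hkey k (appr_modEq hn hn hab)
  have hcont : Continuous φf := by
    rw [Metric.continuous_iff]
    intro a ε hε
    obtain ⟨k, hk⟩ := (hb0.eventually (gt_mem_nhds hε)).exists
    refine ⟨(p : ℝ) ^ (-(k : ℤ)), zpow_pos (by exact_mod_cast hp.out.pos) _, fun b hb => ?_⟩
    rw [dist_eq_norm]
    exact lt_of_le_of_lt (hest k b a (by rw [← dist_eq_norm]; exact hb.le)) hk
  have hφmul : ∀ a b, φf (a + b) = φf a * φf b := by
    intro a b
    have h1 : Tendsto (fun n => x ^ (a.appr n + b.appr n)) atTop (𝓝 (φf a * φf b)) := by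
      simpa [pow_add] using (htend a).mul (htend b)
    have h2 := htend (a + b)
    have h3 : Tendsto (fun n => x ^ (a + b).appr n - x ^ (a.appr n + b.appr n)) atTop (𝓝 0) := by
      rw [tendsto_zero_iff_norm_tendsto_zero]
      refine squeeze_zero (fun n => norm_nonneg _) (fun n => ?_) hb0
      refine hkey n (nat_modEq_of_norm ?_)
      have heq : ((a + b).appr n : ℤ_[p]) - ((a.appr n + b.appr n : ℕ) : ℤ_[p]) =
          (((a + b).appr n : ℤ_[p]) - (a + b)) +
            ((a - (a.appr n : ℤ_[p])) + (b - (b.appr n : ℤ_[p]))) := by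
        push_cast; ring
      rw [heq]
      refine (norm_add_le_max _ _).trans (max_le (appr_dist _ n) ?_)
      refine (norm_add_le_max _ _).trans (max_le ?_ ?_) <;> rw [norm_sub_rev] <;>
        exact appr_dist _ n
    have h4 := tendsto_nhds_unique (h2.sub h1) h3
    linear_combination h4
  have hone : φf 1 = x := by
    refine tendsto_nhds_unique (htend 1) ?_
    rw [tendsto_iff_norm_sub_tendsto_zero]
    refine squeeze_zero (fun n => norm_nonneg _) (fun n => ?_) hb0
    have h5 : ‖x ^ (1 : ℤ_[p]).appr n - x ^ 1‖ ≤ c ^ n * ‖x - 1‖ := by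
      refine hkey n (nat_modEq_of_norm ?_)
      simpa using appr_dist (1 : ℤ_[p]) n
    simpa using h5
  exact ⟨⟨φf, hcont⟩, hφmul, hnorm, hone⟩

lemma hom_map_zero (φ : C(ℤ_[p], K)) (hmul : ∀ a b, φ (a + b) = φ a * φ b)
    (hn : ∀ a, ‖φ a‖ = 1) : φ 0 = 1 := by
  have hne : φ 0 ≠ 0 := fun h => by simpa [h] using hn 0
  have h00 : φ 0 * φ 0 = φ 0 * 1 := by rw [← hmul]; simp
  exact mul_left_cancel₀ hne h00

lemma hom_natCast (φ : C(ℤ_[p], K)) (hmul : ∀ a b, φ (a + b) = φ a * φ b)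
    (hn : ∀ a, ‖φ a‖ = 1) (n : ℕ) : φ ((n : ℤ_[p])) = (φ 1) ^ n := by
  induction n with
  | zero => simpa using hom_map_zero φ hmul hn
  | succ n ih =>
    have : ((n + 1 : ℕ) : ℤ_[p]) = (n : ℤ_[p]) + 1 := by push_cast; ring
    rw [this, hmul, ih, pow_succ]

lemma pointwise (φ φ' : C(ℤ_[p], K)) (h1 : ∀ a b, φ (a + b) = φ a * φ b)
    (h2 : ∀ a, ‖φ a‖ = 1) (h3 : ∀ a b, φ' (a + b) = φ' a * φ' b)
    (h4 : ∀ a, ‖φ' a‖ = 1) (a : ℤ_[p]) : ‖φ a - φ' a‖ ≤ ‖φ 1 - φ' 1‖ := by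
  refine PadicInt.denseRange_natCast.induction_on a ?_ ?_
  · exact isClosed_le ((φ.continuous.sub φ'.continuous).norm) continuous_const
  · intro n
    rw [hom_natCast φ h1 h2, hom_natCast φ' h3 h4]
    exact pow_sub_pow_norm_le (h2 1).le (h4 1).le n

lemma norm_pow_p_sub_one_eq_one (hpK : ‖(p : K)‖ < 1) {v : K} (hv : ‖v‖ = 1)
    (hv1 : ‖v - 1‖ = 1) : ‖v ^ p - 1‖ = 1 := by
  have hP : 0 < p := hp.out.pos
  set f : ℕ → K := fun i => (v - 1) ^ i * 1 ^ (p - i) * (p.choose i : K) with hf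
  have hvp : v ^ p = ∑ i ∈ Finset.range (p + 1), f i := by
    rw [hf, ← add_pow, sub_add_cancel]
  have hsplit : v ^ p = (∑ i ∈ Finset.range p, f i) + (v - 1) ^ p := by
    rw [hvp, Finset.sum_range_succ]
    simp [hf]
  have h0mem : (0 : ℕ) ∈ Finset.range p := Finset.mem_range.mpr hP
  have hsum : (∑ i ∈ Finset.range p, f i) = (∑ i ∈ (Finset.range p).erase 0, f i) + 1 := by
    rw [← Finset.sum_erase_add _ _ h0mem]
    simp [hf]
  have hr : v ^ p - 1 = (v - 1) ^ p + ∑ i ∈ (Finset.range p).erase 0, f i := by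
    rw [hsplit, hsum]; ring
  have hrn : ‖∑ i ∈ (Finset.range p).erase 0, f i‖ ≤ ‖(p : K)‖ := by
    refine norm_sum_le_of_forall_le_of_nonneg (norm_nonneg _) fun i hi => ?_
    obtain ⟨hi0, hip⟩ := Finset.mem_erase.mp hi
    have hip' : i < p := Finset.mem_range.mp hip
    obtain ⟨d, hd⟩ := hp.out.dvd_choose_self hi0 hip'
    rw [hf]
    simp only [one_pow, mul_one]
    rw [norm_mul, norm_pow, hv1, one_pow, one_mul, hd]
    push_cast
    rw [norm_mul]
    calc ‖(p : K)‖ * ‖(d : K)‖ ≤ ‖(p : K)‖ * 1 :=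
          mul_le_mul_of_nonneg_left (IsUltrametricDist.norm_natCast_le_one K d) (norm_nonneg _)
      _ = ‖(p : K)‖ := mul_one _
  have hlt : ‖∑ i ∈ (Finset.range p).erase 0, f i‖ < ‖(v - 1) ^ p‖ := by
    rw [norm_pow, hv1, one_pow]
    exact lt_of_le_of_lt hrn hpK
  rw [hr, norm_add_eq_left hlt, norm_pow, hv1, one_pow]

lemma norm_sub_one_lt (hpK : ‖(p : K)‖ < 1) (φ : C(ℤ_[p], K))
    (hmul : ∀ a b, φ (a + b) = φ a * φ b) (hn : ∀ a, ‖φ a‖ = 1) : ‖φ 1 - 1‖ < 1 := by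
  set u := φ 1 with hu
  have hun : ‖u‖ = 1 := hn 1
  by_contra hcon
  push_neg at hcon
  have hu1 : ‖u - 1‖ = 1 := by
    refine le_antisymm ?_ hcon
    have : u - 1 = u + (-1) := by ring
    rw [this]
    exact (norm_add_le_max _ _).trans (by simp [hun])
  have hiter : ∀ n : ℕ, ‖u ^ p ^ n - 1‖ = 1 := by
    intro n
    induction n with
    | zero => simpa using hu1
    | succ n ih =>
      have hyn : ‖u ^ p ^ n‖ = 1 := by rw [norm_pow, hun, one_pow]
      have := norm_pow_p_sub_one_eq_one hpK hyn ih
      rwa [← pow_mul, ← pow_succ] at this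
  have hplt : ‖(p : ℤ_[p])‖ < 1 := by
    rw [PadicInt.norm_p]
    exact inv_lt_one_of_one_lt₀ (by exact_mod_cast hp.out.one_lt)
  have htd : Tendsto (fun n : ℕ => ((p : ℤ_[p])) ^ n) atTop (𝓝 0) :=
    tendsto_pow_atTop_nhds_zero_of_norm_lt_one hplt
  have hcomp : Tendsto (fun n : ℕ => φ ((p : ℤ_[p]) ^ n)) atTop (𝓝 1) := by
    have := (φ.continuous.tendsto 0).comp htd
    rwa [hom_map_zero φ hmul hn] at this
  have heq : ∀ n : ℕ, φ ((p : ℤ_[p]) ^ n) = u ^ p ^ n := by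
    intro n
    have : ((p : ℤ_[p])) ^ n = ((p ^ n : ℕ) : ℤ_[p]) := by push_cast; ring
    rw [this, hom_natCast φ hmul hn]
  rw [show (fun n : ℕ => φ ((p : ℤ_[p]) ^ n)) = fun n : ℕ => u ^ p ^ n from funext heq] at hcomp
  have h0 : Tendsto (fun n : ℕ => ‖u ^ p ^ n - 1‖) atTop (𝓝 0) := by
    simpa using (tendsto_iff_norm_sub_tendsto_zero.mp hcomp)
  simp only [hiter] at h0
  exact one_ne_zero (tendsto_nhds_unique tendsto_const_nhds h0)

end EvalOneAux

open EvalOneAux in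
/-- For any two continuous group homomorphisms `φ, φ' : ℤ_p → 𝒪ˣ` one has
`sup_{a} ‖φ a - φ' a‖ = ‖φ 1 - φ' 1‖`.  In particular, endowing the set
`Hom_c(ℤ_p, 𝒪ˣ)` (realized as the subspace of `C(ℤ_p, ℂ_p)` of multiplicative norm-one
valued maps, with the uniform-convergence topology) with its natural topology, evaluation
at `1` is a homeomorphism onto `U₁ = {x : ‖x - 1‖ < 1}` with its subspace topology.
Here `Cp` is any field satisfying the characterizing properties of `ℂ_p`. -/
theorem evaluation_at_one_isometry_and_homeomorphism
    {p : ℕ} [Fact (Nat.Prime p)]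
    {Cp : Type} [NormedField Cp] [CompleteSpace Cp] [IsAlgClosed Cp]
    [IsUltrametricDist Cp] [NormedAlgebra ℚ_[p] Cp]
    (hdense : Dense {x : Cp | IsAlgebraic ℚ_[p] x}) :
    (∀ φ φ' : C(ℤ_[p], Cp),
      (∀ a b : ℤ_[p], φ (a + b) = φ a * φ b) → (∀ a : ℤ_[p], ‖φ a‖ = 1) →
      (∀ a b : ℤ_[p], φ' (a + b) = φ' a * φ' b) → (∀ a : ℤ_[p], ‖φ' a‖ = 1) →
      (⨆ a : ℤ_[p], ‖φ a - φ' a‖) = ‖φ 1 - φ' 1‖) ∧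
    ∃ h : {φ : C(ℤ_[p], Cp) //
            (∀ a b : ℤ_[p], φ (a + b) = φ a * φ b) ∧ ∀ a : ℤ_[p], ‖φ a‖ = 1} ≃ₜ
          {x : Cp // ‖x - 1‖ < 1},
      ∀ φ, (h φ : Cp) = φ.1 1 := by
  have hpK : ‖(p : Cp)‖ < 1 := by
    have h1 : (p : Cp) = algebraMap ℚ_[p] Cp (p : ℚ_[p]) := (map_natCast (algebraMap ℚ_[p] Cp) p).symm
    rw [h1, norm_algebraMap', Padic.norm_p]
    exact inv_lt_one_of_one_lt₀ (by exact_mod_cast (Fact.out : p.Prime).one_lt)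
  constructor
  · intro φ φ' h1 h2 h3 h4
    have hbdd : BddAbove (Set.range fun a : ℤ_[p] => ‖φ a - φ' a‖) := by
      refine ⟨‖φ 1 - φ' 1‖, ?_⟩
      rintro r ⟨a, rfl⟩
      exact pointwise φ φ' h1 h2 h3 h4 a
    refine le_antisymm (ciSup_le fun a => pointwise φ φ' h1 h2 h3 h4 a) (le_ciSup hbdd 1)
  · have hF : ∀ φ : {φ : C(ℤ_[p], Cp) //
        (∀ a b : ℤ_[p], φ (a + b) = φ a * φ b) ∧ ∀ a : ℤ_[p], ‖φ a‖ = 1},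
        ‖(φ.1 1) - 1‖ < 1 := fun φ => norm_sub_one_lt hpK φ.1 φ.2.1 φ.2.2
    set T := {φ : C(ℤ_[p], Cp) //
        (∀ a b : ℤ_[p], φ (a + b) = φ a * φ b) ∧ ∀ a : ℤ_[p], ‖φ a‖ = 1} with hT
    set U := {x : Cp // ‖x - 1‖ < 1} with hU
    let F : T → U := fun φ => ⟨φ.1 1, hF φ⟩
    let G : U → T := fun x => ⟨(exists_hom hpK x.1 x.2).choose,
      (exists_hom hpK x.1 x.2).choose_spec.1, (exists_hom hpK x.1 x.2).choose_spec.2.1⟩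
    have hG1 : ∀ x : U, (G x).1 1 = x.1 := fun x => (exists_hom hpK x.1 x.2).choose_spec.2.2
    have hinj : ∀ φ ψ : T, φ.1 1 = ψ.1 1 → φ = ψ := by
      intro φ ψ h
      refine Subtype.ext (ContinuousMap.ext fun a => ?_)
      have hb := pointwise φ.1 ψ.1 φ.2.1 φ.2.2 ψ.2.1 ψ.2.2 a
      rw [h, sub_self, norm_zero] at hb
      have h0 : ‖φ.1 a - ψ.1 a‖ = 0 := le_antisymm hb (norm_nonneg _)
      exact sub_eq_zero.mp (norm_eq_zero.mp h0)
    have hlip : ∀ x y : U, dist (G x) (G y) ≤ dist x y := by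
      intro x y
      rw [Subtype.dist_eq, Subtype.dist_eq]
      refine (ContinuousMap.dist_le dist_nonneg).mpr fun a => ?_
      rw [dist_eq_norm]
      refine (pointwise (G x).1 (G y).1 (G x).2.1 (G x).2.2 (G y).2.1 (G y).2.2 a).trans ?_
      rw [hG1, hG1, ← dist_eq_norm]
    refine ⟨⟨⟨F, G, fun φ => hinj _ _ (hG1 (F φ)), fun x => Subtype.ext (hG1 x)⟩, ?_, ?_⟩,
      fun φ => rfl⟩
    · exact ((continuous_eval_const (1 : ℤ_[p])).comp
        continuous_subtype_val).subtype_mk _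
    · exact (LipschitzWith.of_dist_le_mul (K := 1)
        (fun x y => by simpa using hlip x y)).continuous
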